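/- Let T ≥ 2, μ > 0, σ > 0 and −1/(T−1) < ρ < 1. There exists a probability distribution P on ℝ₊^T with mean vector μ𝟙 and second-moment matrix Σ + μ²𝟙𝟙ᵀ (where Σ = (1−ρ)σ²I + ρσ²𝟙𝟙ᵀ) if and only if μ² + ρσ² ≥ 0. -/

import Mathlib

open MeasureTheory

private lemma dirac_integrable' {X : Type*} [MeasurableSpace X] [MeasurableSingletonClass X]
    {f : X → ℝ} (hf : Measurable f) (a : X) : Integrable f (Measure.dirac a) :=
  ⟨hf.aestronglyMeasurable, by
    rw [HasFiniteIntegral, lintegral_dirac]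
    exact ENNReal.coe_lt_top⟩

theorem stmt_3 (T : ℕ) (hT : 2 ≤ T) (μ σ ρ : ℝ) (hμ : 0 < μ) (hσ : 0 < σ)
    (hρ1 : -(1 / ((T : ℝ) - 1)) < ρ) (hρ2 : ρ < 1) :
    (∃ P : Measure (Fin T → ℝ), IsProbabilityMeasure P ∧
      (∀ᵐ ξ ∂P, ∀ t, 0 ≤ ξ t) ∧
      (∀ t, Integrable (fun ξ => ξ t) P) ∧
      (∀ s t, Integrable (fun ξ => ξ s * ξ t) P) ∧
      (∀ t, ∫ ξ, ξ t ∂P = μ) ∧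
      (∀ s t : Fin T, ∫ ξ, ξ s * ξ t ∂P =
        (if s = t then (1 - ρ) * σ^2 else 0) + ρ * σ^2 + μ^2)) ↔
    0 ≤ μ^2 + ρ * σ^2 := by
  have hT2 : (2:ℝ) ≤ (T:ℝ) := by exact_mod_cast hT
  have hTpos : (0:ℝ) < T := by linarith
  have hT1 : (0:ℝ) < (T:ℝ) - 1 := by linarith
  constructor
  · rintro ⟨P, hprob, hpos, _, _, _, hsec⟩
    have hne : (⟨0, by omega⟩ : Fin T) ≠ ⟨1, by omega⟩ := by simp [Fin.ext_iff]
    have h := hsec ⟨0, by omega⟩ ⟨1, by omega⟩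
    rw [if_neg hne] at h
    have hnn : 0 ≤ ∫ ξ, ξ ⟨0, by omega⟩ * ξ ⟨1, by omega⟩ ∂P :=
      integral_nonneg_of_ae (hpos.mono fun ξ hξ => mul_nonneg (hξ _) (hξ _))
    rw [h] at hnn
    linarith
  · intro hmm
    have hρT : (-1:ℝ) < ρ * ((T:ℝ) - 1) := by
      have h' : (-1:ℝ) / ((T:ℝ) - 1) < ρ := by
        rw [neg_div]; simpa using hρ1
      exact (div_lt_iff₀ hT1).mp h'
    set v : ℝ := (1 - ρ) * σ^2 with hv
    set m : ℝ := ρ * σ^2 + μ^2 with hmd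
    have hm0 : 0 ≤ m := by rw [hmd]; linarith
    have hvpos : 0 < v := by rw [hv]; exact mul_pos (by linarith) (by positivity)
    set c : ℝ := v / T + m with hc
    have hcpos : 0 < c := by
      have h0 : 0 < v / T := div_pos hvpos hTpos
      rw [hc]; linarith
    have hveq : v = T * (c - m) := by rw [hc]; field_simp; ring
    have hcgt : μ^2 < c := by
      have h1 : 0 < σ^2 * (1 + ρ * ((T:ℝ) - 1)) :=
        mul_pos (by positivity) (by linarith)
      have h2 : c - μ^2 = σ^2 * (1 + ρ * ((T:ℝ) - 1)) / T := by
        rw [hc, hv, hmd]; field_simp; ring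
      nlinarith [div_pos h1 hTpos]
    set α : ℝ := T * c / μ with hα
    set γ : ℝ := c / μ with hγ
    set p : ℝ := μ^2 * v / (T^2 * c^2) with hp
    set q : ℝ := μ^2 * m / c^2 with hq
    set r : ℝ := 1 - μ^2 / c with hr
    have hppos : 0 < p := by rw [hp]; positivity
    have hqnn : 0 ≤ q := by rw [hq]; positivity
    have hrnn : 0 ≤ r := by
      rw [hr]
      have : μ^2 / c < 1 := (div_lt_one hcpos).mpr hcgt
      linarith
    have hαnn : 0 ≤ α := by rw [hα]; positivity
    have hγnn : 0 ≤ γ := by rw [hγ]; positivity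
    set e : Fin T → (Fin T → ℝ) := fun t s => if s = t then α else 0 with he
    set w : Fin T → ℝ := fun _ => γ with hw
    set z : Fin T → ℝ := fun _ => 0 with hz
    set P : Measure (Fin T → ℝ) :=
      (∑ t : Fin T, ENNReal.ofReal p • Measure.dirac (e t)) +
        (ENNReal.ofReal q • Measure.dirac w + ENNReal.ofReal r • Measure.dirac z) with hP
    have key : ∀ f : (Fin T → ℝ) → ℝ, Measurable f →
        Integrable f P ∧
          ∫ ξ, f ξ ∂P = (∑ t : Fin T, p * f (e t)) + (q * f w + r * f z) := by
      intro f hf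
      have h1 : ∀ t : Fin T, Integrable f (ENNReal.ofReal p • Measure.dirac (e t)) :=
        fun t => (dirac_integrable' hf _).smul_measure ENNReal.ofReal_ne_top
      have hsum : Integrable f (∑ t : Fin T, ENNReal.ofReal p • Measure.dirac (e t)) :=
        integrable_finset_sum_measure.mpr fun t _ => h1 t
      have h2 : Integrable f (ENNReal.ofReal q • Measure.dirac w) :=
        (dirac_integrable' hf _).smul_measure ENNReal.ofReal_ne_top
      have h3 : Integrable f (ENNReal.ofReal r • Measure.dirac z) :=
        (dirac_integrable' hf _).smul_measure ENNReal.ofReal_ne_top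
      refine ⟨(hsum.add_measure (h2.add_measure h3)), ?_⟩
      rw [hP]
      rw [integral_add_measure hsum (h2.add_measure h3),
        integral_add_measure h2 h3,
        integral_finset_sum_measure fun t _ => h1 t]
      simp only [integral_smul_measure, integral_dirac, smul_eq_mul,
        ENNReal.toReal_ofReal hppos.le, ENNReal.toReal_ofReal hqnn,
        ENNReal.toReal_ofReal hrnn]
    have hAmeas : MeasurableSet {ξ : Fin T → ℝ | ∀ t, 0 ≤ ξ t} := by
      have : {ξ : Fin T → ℝ | ∀ t, 0 ≤ ξ t} = ⋂ t, {ξ | 0 ≤ ξ t} := by ext; simp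
      rw [this]
      exact MeasurableSet.iInter fun t => measurableSet_le measurable_const (measurable_pi_apply t)
    refine ⟨P, ?_, ?_, ?_, ?_, ?_, ?_⟩
    · constructor
      rw [hP]
      simp only [Measure.add_apply, Measure.finset_sum_apply, Measure.smul_apply,
        Measure.dirac_apply, Set.indicator_of_mem (Set.mem_univ _), Pi.one_apply,
        smul_eq_mul, mul_one, Finset.sum_const, Finset.card_univ, Fintype.card_fin,
        nsmul_eq_mul]
      rw [show ((T:ℕ) : ENNReal) = ENNReal.ofReal (T:ℝ) by simp,
        ← ENNReal.ofReal_mul (by positivity), ← ENNReal.ofReal_add hqnn hrnn,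
        ← ENNReal.ofReal_add (by positivity) (add_nonneg hqnn hrnn)]
      rw [show (T:ℝ) * p + (q + r) = 1 by
        rw [hp, hq, hr, hveq]; field_simp; ring]
      simp
    · rw [ae_iff]
      have hmem : ∀ a : Fin T → ℝ, (∀ t, 0 ≤ a t) →
          a ∉ {ξ : Fin T → ℝ | ¬ (∀ t, 0 ≤ ξ t)} := by
        intro a ha h'; exact h' ha
      have hP0 : ∀ a : Fin T → ℝ, (∀ t, 0 ≤ a t) →
          Measure.dirac a {ξ : Fin T → ℝ | ¬ (∀ t, 0 ≤ ξ t)} = 0 := by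
        intro a ha
        rw [Measure.dirac_apply, Set.indicator_of_notMem (hmem a ha)]
      rw [hP]
      simp only [Measure.add_apply, Measure.finset_sum_apply, Measure.smul_apply, smul_eq_mul]
      rw [hP0 w (fun t => by simp [hw, hγnn]), hP0 z (fun t => by simp [hz])]
      have : ∀ t : Fin T, Measure.dirac (e t) {ξ : Fin T → ℝ | ¬ (∀ t, 0 ≤ ξ t)} = 0 := by
        intro t
        exact hP0 (e t) (fun s => by rw [he]; dsimp only; split <;> simp [hαnn])
      simp only [this, mul_zero, Finset.sum_const_zero, add_zero, zero_add]
    · intro t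
      exact (key _ (measurable_pi_apply t)).1
    · intro s t
      exact (key _ ((measurable_pi_apply s).mul (measurable_pi_apply t))).1
    · intro t
      rw [(key _ (measurable_pi_apply t)).2]
      have hsum : (∑ t' : Fin T, p * e t' t) = p * α := by
        rw [he]
        simp [mul_ite, Finset.sum_ite_eq]
      rw [hsum, hw, hz]
      dsimp only
      rw [hα, hγ, hp, hq, hveq]
      field_simp
      ring
    · intro s t
      rw [(key (fun ξ => ξ s * ξ t) ((measurable_pi_apply s).mul (measurable_pi_apply t))).2]
      by_cases hst : s = t
      · subst hst
        have hsum : (∑ t' : Fin T, p * (e t' s * e t' s)) = p * (α * α) := by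
          rw [he]
          simp [mul_ite, Finset.sum_ite_eq]
        rw [if_pos rfl, hsum, hw, hz]
        dsimp only
        have hpa : p * (α * α) = v := by
          rw [hp, hα]; field_simp
        have hqg : q * (γ * γ) = m := by
          rw [hq, hγ]; field_simp
        rw [hpa, hqg, hv, hmd]
        ring
      · have hsum : (∑ t' : Fin T, p * (e t' s * e t' t)) = 0 := by
          apply Finset.sum_eq_zero
          intro t' _
          rw [he]
          dsimp only
          rcases eq_or_ne t t' with h | h
          · have hs : s ≠ t' := fun hs => hst (hs.trans h.symm)
            rw [if_neg hs, zero_mul, mul_zero]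
          · rw [if_neg h, mul_zero, mul_zero]
        have hqg : q * (γ * γ) = m := by
          rw [hq, hγ]; field_simp
        rw [if_neg hst, hsum, hw, hz]
        dsimp only
        rw [hqg, hmd]
        ring
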